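/- Let ω be an increasing coercive modulus of continuity and φ_ω(t) = ∫₀ᵗ ω(s) ds. Then t·ω⁻¹(t/2) ≤ (φ_ω)*(t) ≤ (t/2)·ω⁻¹(t) for all t ≥ 0. -/

import Mathlib

open Set

theorem stmt_4 (ω ωinv φ conj : ℝ → ℝ)
    (hnonneg : ∀ t ∈ Ici (0:ℝ), 0 ≤ ω t)
    (hmono : StrictMonoOn ω (Ici (0:ℝ)))
    (hconc : ConcaveOn ℝ (Ici (0:ℝ)) ω)
    (h0 : ω 0 = 0)
    (h0' : Filter.Tendsto ω (nhdsWithin 0 (Ioi (0:ℝ))) (nhds 0))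
    (hcoer : Filter.Tendsto ω Filter.atTop Filter.atTop)
    (hφ : ∀ t, φ t = ∫ s in (0:ℝ)..t, ω s)
    (hinv₁ : ∀ t ∈ Ici (0:ℝ), 0 ≤ ωinv t ∧ ω (ωinv t) = t)
    (hinv₂ : ∀ s ∈ Ici (0:ℝ), ωinv (ω s) = s)
    (hconj : ∀ t, conj t = sSup {y : ℝ | ∃ s : ℝ, 0 ≤ s ∧ y = t * s - φ s}) :
    ∀ t : ℝ, 0 ≤ t → t * ωinv (t / 2) ≤ conj t ∧ conj t ≤ t / 2 * ωinv t := by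
  intro t ht
  have hmonoOn : MonotoneOn ω (Ici 0) := hmono.monotoneOn
  have hint : ∀ a b : ℝ, 0 ≤ a → a ≤ b → IntervalIntegrable ω MeasureTheory.volume a b := by
    intro a b ha hab
    apply MonotoneOn.intervalIntegrable
    apply hmonoOn.mono
    rw [uIcc_of_le hab]
    exact fun x hx => le_trans ha hx.1
  obtain ⟨hs₀0, hωs₀⟩ := hinv₁ (t/2) (by simp; linarith)
  obtain ⟨hs₁0, hωs₁⟩ := hinv₁ t (by simpa using ht)
  set s₀ := ωinv (t/2) with hs₀def
  set s₁ := ωinv t with hs₁def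
  have hφ0 : φ 0 = 0 := by rw [hφ]; simp
  -- φ s₁ ≥ t * s₁ / 2 (chord bound via concavity)
  have hchord : t * s₁ / 2 ≤ φ s₁ := by
    rcases eq_or_lt_of_le hs₁0 with h | h
    · have : t = 0 := by rw [← hωs₁, ← h, h0]
      rw [← h, hφ0]; simp [this]
    · have hpt : ∀ u ∈ Icc (0:ℝ) s₁, u * (t / s₁) ≤ ω u := by
        intro u hu
        have hb0 : 0 ≤ u / s₁ := div_nonneg hu.1 h.le
        have hb1 : u / s₁ ≤ 1 := (div_le_one h).mpr hu.2
        have := hconc.2 (self_mem_Ici) (mem_Ici.mpr hs₁0)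
          (by linarith : (0:ℝ) ≤ 1 - u / s₁) hb0 (by ring)
        simp only [smul_eq_mul, mul_zero, h0, zero_add] at this
        rw [hωs₁, div_mul_cancel₀ u (ne_of_gt h)] at this
        calc u * (t / s₁) = u / s₁ * t := by ring
          _ ≤ ω u := this
      have hInt1 : IntervalIntegrable (fun u : ℝ => u * (t / s₁)) MeasureTheory.volume 0 s₁ :=
        (continuous_id.mul continuous_const).intervalIntegrable _ _
      have := intervalIntegral.integral_mono_on hs₁0 hInt1 (hint 0 s₁ le_rfl hs₁0) hpt
      rw [hφ]
      calc t * s₁ / 2 = (s₁ ^ 2 - 0 ^ 2) / 2 * (t / s₁) := by field_simp; ring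
        _ = ∫ u in (0:ℝ)..s₁, u * (t / s₁) := by
            rw [intervalIntegral.integral_mul_const, integral_id]
        _ ≤ ∫ u in (0:ℝ)..s₁, ω u := this
  -- every element of the set is ≤ t/2 * s₁
  have key : ∀ s : ℝ, 0 ≤ s → t * s - φ s ≤ t / 2 * s₁ := by
    intro s hs
    have hmain : t * s - t * s₁ ≤ φ s - φ s₁ := by
      rcases le_total s s₁ with hss | hss
      · have hub : ∀ u ∈ Icc s s₁, ω u ≤ t := by
          intro u hu
          rw [← hωs₁]
          exact hmonoOn (mem_Ici.mpr (le_trans hs hu.1)) (mem_Ici.mpr hs₁0) hu.2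
        have := intervalIntegral.integral_mono_on hss (hint s s₁ hs hss)
          (intervalIntegrable_const) hub
        rw [intervalIntegral.integral_const, smul_eq_mul] at this
        have hdiff : (∫ u in s..s₁, ω u) = φ s₁ - φ s := by
          rw [hφ, hφ]
          exact (intervalIntegral.integral_interval_sub_left
            (hint 0 s₁ le_rfl hs₁0) (hint 0 s le_rfl hs)).symm
        linarith [hdiff ▸ this]
      · have hlb : ∀ u ∈ Icc s₁ s, t ≤ ω u := by
          intro u hu
          rw [← hωs₁]
          exact hmonoOn (mem_Ici.mpr hs₁0) (mem_Ici.mpr (le_trans hs₁0 hu.1)) hu.1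
        have := intervalIntegral.integral_mono_on hss (intervalIntegrable_const)
          (hint s₁ s hs₁0 hss) hlb
        rw [intervalIntegral.integral_const, smul_eq_mul] at this
        have hdiff : (∫ u in s₁..s, ω u) = φ s - φ s₁ := by
          rw [hφ, hφ]
          exact (intervalIntegral.integral_interval_sub_left
            (hint 0 s le_rfl hs) (hint 0 s₁ le_rfl hs₁0)).symm
        linarith [hdiff ▸ this]
    linarith
  have hbdd : BddAbove {y : ℝ | ∃ s : ℝ, 0 ≤ s ∧ y = t * s - φ s} := by
    refine ⟨t / 2 * s₁, ?_⟩
    rintro y ⟨s, hs, rfl⟩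
    exact key s hs
  constructor
  · -- lower bound
    -- φ (2*s₀) ≤ t * s₀ via reflection
    have hrefl : (∫ u in (0:ℝ)..(2*s₀), ω (2*s₀ - u)) = ∫ u in (0:ℝ)..(2*s₀), ω u := by
      rw [intervalIntegral.integral_comp_sub_left (fun u => ω u) (2*s₀)]
      norm_num
    have hs₀2 : (0:ℝ) ≤ 2 * s₀ := by linarith
    have hpair : ∀ u ∈ Icc (0:ℝ) (2*s₀), ω u + ω (2*s₀ - u) ≤ t := by
      intro u hu
      have h1 : u ∈ Ici (0:ℝ) := mem_Ici.mpr hu.1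
      have h2 : 2*s₀ - u ∈ Ici (0:ℝ) := mem_Ici.mpr (by linarith [hu.2])
      have := hconc.2 h1 h2 (by norm_num : (0:ℝ) ≤ 1/2) (by norm_num : (0:ℝ) ≤ 1/2)
        (by norm_num)
      simp only [smul_eq_mul] at this
      have : 1/2 * ω u + 1/2 * ω (2*s₀ - u) ≤ ω s₀ := by
        convert this using 2
        · rfl
        ring
      rw [hωs₀] at this
      linarith
    have hφ2 : φ (2*s₀) ≤ t * s₀ := by
      have hintr : IntervalIntegrable (fun u => ω (2*s₀ - u)) MeasureTheory.volume 0 (2*s₀) := by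
        apply AntitoneOn.intervalIntegrable
        intro x hx y hy hxy
        rw [uIcc_of_le hs₀2] at hx hy
        exact hmonoOn (mem_Ici.mpr (by linarith [hy.2])) (mem_Ici.mpr (by linarith [hx.2]))
          (by linarith)
      have hsum := intervalIntegral.integral_mono_on hs₀2
        ((hint 0 (2*s₀) le_rfl hs₀2).add hintr) (intervalIntegrable_const) hpair
      rw [intervalIntegral.integral_add (hint 0 (2*s₀) le_rfl hs₀2) hintr,
        hrefl, intervalIntegral.integral_const, smul_eq_mul] at hsum
      rw [hφ]
      linarith
    have hmem : t * (2*s₀) - φ (2*s₀) ∈ {y : ℝ | ∃ s : ℝ, 0 ≤ s ∧ y = t * s - φ s} :=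
      ⟨2*s₀, hs₀2, rfl⟩
    have := le_csSup hbdd hmem
    rw [hconj]
    linarith
  · rw [hconj]
    apply Real.sSup_le
    · rintro y ⟨s, hs, rfl⟩
      exact key s hs
    · positivity
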